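/- In the finite Bayesian setting, if the acquisition value at input x vanishes for the strictly convex G and equals zero for all test points x', i.e., Σ_y p̄(y|x) G(p̄_y(·|x')) = G(p̄(·|x')) for all x', then for every y with p̄(y|x) > 0 and every x', the updated predictive equals the current predictive: p̄_y(·|x') = p̄(·|x'). -/

import Mathlib

open Finset Real

def probSimplex (Y : Type*) [Fintype Y] : Set (Y → ℝ) :=
  {q | (∀ y, 0 ≤ q y) ∧ ∑ y, q y = 1}

/-- If the BEMPS acquisition value at `x` vanishes for all test points `x'`, then
    observing the label at `x` cannot change any prediction. -/
theorem bemps_zero_no_change {Y : Type*} [Fintype Y] {Θ : Type*} [Fintype Θ]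
    {X : Type*} [Fintype X]
    (w : Θ → ℝ) (hw : (∀ θ, 0 ≤ w θ) ∧ ∑ θ, w θ = 1)
    (p : Θ → X → Y → ℝ) (hp : ∀ θ x, p θ x ∈ probSimplex Y)
    (x : X) (hpos : ∀ y, 0 < ∑ θ, w θ * p θ x y)
    (G : (Y → ℝ) → ℝ) (hG : StrictConvexOn ℝ (probSimplex Y) G)
    (hzero : ∀ x' : X,
      ∑ y, (∑ θ, w θ * p θ x y) *
          G (fun z => ∑ θ, (w θ * p θ x y / (∑ θ', w θ' * p θ' x y)) * p θ x' z)
        = G (fun z => ∑ θ, w θ * p θ x' z)) :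
    ∀ y, 0 < (∑ θ, w θ * p θ x y) → ∀ x' : X,
      (fun z => ∑ θ, (w θ * p θ x y / (∑ θ', w θ' * p θ' x y)) * p θ x' z)
        = (fun z => ∑ θ, w θ * p θ x' z) := by
  obtain ⟨hw0, hw1⟩ := hw
  intro y hy x'
  set a : Y → ℝ := fun y => ∑ θ, w θ * p θ x y with ha
  set q : Y → Y → ℝ :=
    fun y z => ∑ θ, (w θ * p θ x y / (∑ θ', w θ' * p θ' x y)) * p θ x' z with hqdef
  have ha0 : ∀ y, 0 < a y := hpos
  have hterm : ∀ (y : Y) θ, 0 ≤ w θ * p θ x y := fun y θ =>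
    mul_nonneg (hw0 θ) ((hp θ x).1 y)
  have hsum1 : ∑ y, a y = 1 := by
    rw [Finset.sum_comm]
    calc ∑ θ, ∑ y, w θ * p θ x y = ∑ θ, w θ * ∑ y, p θ x y := by
          simp [Finset.mul_sum]
      _ = 1 := by
          simp only [(hp _ x).2, mul_one]; exact hw1
  have hq : ∀ y, q y ∈ probSimplex Y := by
    intro y
    constructor
    · intro z
      exact Finset.sum_nonneg fun θ _ =>
        mul_nonneg (div_nonneg (hterm y θ) (ha0 y).le) ((hp θ x').1 z)
    · rw [Finset.sum_comm]
      calc ∑ θ, ∑ z, (w θ * p θ x y / a y) * p θ x' z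
          = ∑ θ, (w θ * p θ x y / a y) * ∑ z, p θ x' z := by simp [Finset.mul_sum]
        _ = (∑ θ, w θ * p θ x y) / a y := by
            simp only [(hp _ x').2, mul_one, Finset.sum_div]
        _ = 1 := div_self (ha0 y).ne'
  have hmix : (fun z => ∑ θ, w θ * p θ x' z) = ∑ y, a y • q y := by
    funext z
    have : (∑ y, a y • q y) z = ∑ y, a y * q y z := by
      simp [Finset.sum_apply]
    rw [this]
    have heach : ∀ y, a y * q y z = ∑ θ, w θ * p θ x y * p θ x' z := by
      intro y
      rw [Finset.mul_sum]
      congr 1; funext θ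
      rw [show (∑ θ' : Θ, w θ' * p θ' x y) = a y from rfl]
      have hane := (ha0 y).ne'
      field_simp
    simp only [heach]
    rw [Finset.sum_comm]
    congr 1; funext θ
    rw [← Finset.sum_mul, ← Finset.mul_sum, (hp θ x).2, mul_one]
  have key : G (∑ i ∈ Finset.univ, a i • q i) = ∑ i ∈ Finset.univ, a i • G (q i) := by
    rw [← hmix]
    rw [← hzero x']
    simp [smul_eq_mul]
    rfl
  have := (hG.map_sum_eq_iff' (t := Finset.univ) (w := a) (p := q)
      (fun i _ => (ha0 i).le) hsum1 (fun i _ => hq i)).mp key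
  have hy' := this y (Finset.mem_univ y) (ha0 y).ne'
  rw [hmix]
  exact hy'
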